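/- Let B be a commutative unital complex Banach algebra and let a_0, a_1, ..., a_n ∈ B. For z ∈ ℂ^{n+1}, the pencil A(z) = z_0a_0 + z_1a_1 + ⋯ + z_na_n is not invertible in B if and only if there exists a character φ of B (a nonzero algebra homomorphism φ : B → ℂ) with z_0φ(a_0) + z_1φ(a_1) + ⋯ + z_nφ(a_n) = 0. In other words, the projective spectrum p(A) is the union of the projective hyperplanes H_w = {z : z_0w_0 + ⋯ + z_nw_n = 0} over all w = (φ(a_0), ..., φ(a_n)) with φ a character of B. -/

import Mathlib

/-- In a commutative unital complex Banach algebra, the pencil `A(z) = z₀a₀ + ⋯ + zₙaₙ` is not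
invertible iff some character `φ` satisfies `z₀φ(a₀) + ⋯ + zₙφ(aₙ) = 0`; i.e. the projective
spectrum is the union of the hyperplanes `H_{(φ(a₀),...,φ(aₙ))}` over characters `φ`. -/
theorem stmt3 {B : Type*} [NormedCommRing B] [NormedAlgebra ℂ B] [CompleteSpace B]
    [Nontrivial B] (n : ℕ) (a : Fin (n + 1) → B) (z : Fin (n + 1) → ℂ) :
    ¬ IsUnit (∑ i, z i • a i) ↔ ∃ φ : B →ₐ[ℂ] ℂ, ∑ i, z i * φ (a i) = 0 := by
  constructor
  · intro h
    have h0 : (0 : ℂ) ∈ spectrum ℂ (∑ i, z i • a i) := by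
      rwa [spectrum.zero_mem_iff]
    rw [WeakDual.CharacterSpace.mem_spectrum_iff_exists] at h0
    obtain ⟨f, hf⟩ := h0
    refine ⟨(AlgHomClass.toAlgHom f : B →ₐ[ℂ] ℂ), ?_⟩
    rw [← hf]
    simp [map_sum, smul_eq_mul]
  · rintro ⟨φ, hφ⟩ hu
    obtain ⟨u, hu'⟩ := hu
    have : φ (∑ i, z i • a i) = 0 := by
      simpa [map_sum] using hφ
    have h1 : φ (u : B) * φ ((u⁻¹ : Bˣ) : B) = 1 := by
      rw [← map_mul]; simp
    rw [hu', this, zero_mul] at h1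
    exact zero_ne_one h1
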